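/- For every integer p ≥ 2 with p ≤ 6, the two solutions (x₁, x₄) of the system {4(p−1)x₁² − 4(2p−1)x₁ + (p−1)x₄ + 3p−1 = 0, 4(p−1)x₁² + (3p−1)x₄² − 4(2p−1)x₁x₄ + (p−1)x₄ = 0} given by x₄ = (7p³ − p² − 3p + 1 ± 2(2p−1)√(2p(−p³+7p²−5p+1)))/((p−1)(3p−1)²) and x₁ = √(p·x₄/(2(p−1))) are real and positive. -/

import Mathlib

/-- For every integer 2 ≤ p ≤ 6, the two solutions (x₁, x₄) of the Einstein system
for SO(4p)/U(p)×U(p), given by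
x₄ = (7p³−p²−3p+1 ± 2(2p−1)√(2p(−p³+7p²−5p+1)))/((p−1)(3p−1)²) and
x₁ = √(p·x₄/(2(p−1))), are real and positive. -/
theorem stmt_10 (p : ℤ) (h2 : 2 ≤ p) (h6 : p ≤ 6) (ε : ℝ) (hε : ε = 1 ∨ ε = -1) :
    let P : ℝ := (p : ℝ)
    let x₄ : ℝ := (7 * P ^ 3 - P ^ 2 - 3 * P + 1
        + ε * (2 * (2 * P - 1) * Real.sqrt (2 * P * (-P ^ 3 + 7 * P ^ 2 - 5 * P + 1))))
        / ((P - 1) * (3 * P - 1) ^ 2)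
    let x₁ : ℝ := Real.sqrt (P * x₄ / (2 * (P - 1)))
    0 < x₄ ∧ 0 < x₁ ∧
      4 * (P - 1) * x₁ ^ 2 - 4 * (2 * P - 1) * x₁ + (P - 1) * x₄ + 3 * P - 1 = 0 ∧
      4 * (P - 1) * x₁ ^ 2 + (3 * P - 1) * x₄ ^ 2 - 4 * (2 * P - 1) * x₁ * x₄
        + (P - 1) * x₄ = 0 := by
  intro P x₄ x₁
  have hP2 : (2 : ℝ) ≤ P := by show (2 : ℝ) ≤ (p : ℝ); exact_mod_cast h2
  have hP6 : P ≤ 6 := by show (p : ℝ) ≤ 6; exact_mod_cast h6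
  have hx4 : x₄ = (7 * P ^ 3 - P ^ 2 - 3 * P + 1
      + ε * (2 * (2 * P - 1) * Real.sqrt (2 * P * (-P ^ 3 + 7 * P ^ 2 - 5 * P + 1))))
      / ((P - 1) * (3 * P - 1) ^ 2) := rfl
  have hx1def : x₁ = Real.sqrt (P * x₄ / (2 * (P - 1))) := rfl
  clear_value x₁
  clear_value x₄
  clear_value P
  have hε2 : ε ^ 2 = 1 := by rcases hε with h | h <;> rw [h] <;> norm_num
  set s : ℝ := Real.sqrt (2 * P * (-P ^ 3 + 7 * P ^ 2 - 5 * P + 1)) with hsdef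
  have hD : 0 < 2 * P * (-P ^ 3 + 7 * P ^ 2 - 5 * P + 1) := by
    nlinarith [mul_nonneg (by linarith : (0:ℝ) ≤ 6 - P) (by nlinarith : (0:ℝ) ≤ P ^ 2 - P - 1)]
  have hs2 : s ^ 2 = 2 * P * (-P ^ 3 + 7 * P ^ 2 - 5 * P + 1) := Real.sq_sqrt hD.le
  have hs0 : 0 < s := Real.sqrt_pos.mpr hD
  have hb : (0 : ℝ) < (P - 1) * (3 * P - 1) ^ 2 := by nlinarith
  have hnum : 0 < 7 * P ^ 3 - P ^ 2 - 3 * P + 1 + ε * (2 * (2 * P - 1) * s) := by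
    rcases hε with h | h <;> rw [h]
    · nlinarith
    · have key : (7 * P ^ 3 - P ^ 2 - 3 * P + 1 - 2 * (2 * P - 1) * s) *
          (7 * P ^ 3 - P ^ 2 - 3 * P + 1 + 2 * (2 * P - 1) * s)
          = ((P - 1) * (3 * P - 1) ^ 2) ^ 2 := by
        linear_combination (-(4 * (2 * P - 1) ^ 2)) * hs2
      have hB : 0 < 7 * P ^ 3 - P ^ 2 - 3 * P + 1 + 2 * (2 * P - 1) * s := by nlinarith
      nlinarith [key, hB, hb]
  have hx4pos : 0 < x₄ := by rw [hx4]; exact div_pos hnum hb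
  have hx4' : x₄ * ((P - 1) * (3 * P - 1) ^ 2)
      = 7 * P ^ 3 - P ^ 2 - 3 * P + 1 + ε * (2 * (2 * P - 1) * s) := by
    rw [hx4]; exact div_mul_cancel₀ _ hb.ne'
  have hq : (P - 1) * (3 * P - 1) ^ 2 * (x₄ + 1) ^ 2 = 8 * P * (2 * P - 1) ^ 2 * x₄ := by
    apply mul_left_cancel₀ hb.ne'
    linear_combination (x₄ * ((P - 1) * (3 * P - 1) ^ 2)
        + 7 * P ^ 3 - P ^ 2 - 3 * P + 1 + ε * (2 * (2 * P - 1) * s)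
        - 2 * (7 * P ^ 3 - P ^ 2 - 3 * P + 1)) * hx4'
      + (2 * (2 * P - 1) * s) ^ 2 * hε2 + 4 * (2 * P - 1) ^ 2 * hs2
  set L : ℝ := (3 * P - 1) * (x₄ + 1) / (4 * (2 * P - 1)) with hLdef
  have hLpos : 0 < L := by
    apply div_pos
    · nlinarith
    · linarith
  have hLsq : P * x₄ / (2 * (P - 1)) = L ^ 2 := by
    rw [hLdef, div_pow, div_eq_div_iff (by linarith : (0:ℝ) < 2 * (P - 1)).ne'
      (pow_pos (by linarith : (0:ℝ) < 4 * (2 * P - 1)) 2).ne']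
    linear_combination -2 * hq
  have hx1 : x₁ = L := by rw [hx1def, hLsq, Real.sqrt_sq hLpos.le]
  have hx1pos : 0 < x₁ := hx1 ▸ hLpos
  have hx1sq : x₁ ^ 2 = P * x₄ / (2 * (P - 1)) := by rw [hx1, hLsq]
  have hP1 : P - 1 ≠ 0 := by linarith
  have h2P : 2 * P - 1 ≠ 0 := by linarith
  refine ⟨hx4pos, hx1pos, ?_, ?_⟩
  · rw [hx1sq, hx1, hLdef]
    field_simp
    have h2P' : P * 2 - 1 ≠ 0 := by linarith
    field_simp
    ring
  · rw [hx1sq, hx1, hLdef]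
    field_simp
    have h2P' : P * 2 - 1 ≠ 0 := by linarith
    field_simp
    ring
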